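/- Semantic promotion for banged contexts: if !Γ ⊩ φ (valid in all bases with empty resource multiset) then !Γ ⊩ !φ. -/
import Mathlib


abbrev Atom := ℕ
abbrev ASeq := Multiset Atom × Atom
abbrev Box := Multiset ASeq
abbrev ARule := Multiset Box × Box × Atom
abbrev Base := Set ARule

/-- An atom `d` is persistent in `B` if there is a rule `⟨∅, S, d⟩ ∈ B` with `S` nonempty. -/
def Persistent (B : Base) (d : Atom) : Prop :=
  ∃ S : Box, S ≠ 0 ∧ ((0 : Multiset Box), S, d) ∈ B

/-- Atomic derivability in a base. -/
inductive Deriv (B : Base) : Multiset Atom → Atom → Prop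
  | ref (p : Atom) : Deriv B {p} p
  | app (S : Box) (p : Atom)
      (bc : List (Box × Multiset Atom))
      (dc : List (Atom × Multiset Atom))
      (hrule : ((↑(bc.map Prod.fst) : Multiset Box), S, p) ∈ B)
      (hpers : ∀ x ∈ dc, Persistent B x.1)
      (hbox : ∀ x ∈ bc, ∀ s ∈ x.1, Deriv B (x.2 + s.1) s.2)
      (hd : ∀ x ∈ dc, Deriv B x.2 x.1)
      (hS : ∀ s ∈ S, Deriv B ((↑(dc.map Prod.fst) : Multiset Atom) + s.1) s.2) :
      Deriv B ((bc.map Prod.snd).sum + (dc.map Prod.snd).sum) p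

/-- Formulas of intuitionistic linear logic. -/
inductive Fml : Type
  | atom : Atom → Fml
  | top : Fml
  | zero : Fml
  | one : Fml
  | limp : Fml → Fml → Fml
  | tens : Fml → Fml → Fml
  | wth : Fml → Fml → Fml
  | plus : Fml → Fml → Fml
  | bang : Fml → Fml
deriving DecidableEq

/-- The degree of a formula. -/
def deg : Fml → ℕ
  | .atom _ => 1
  | .top => 2
  | .zero => 2
  | .one => 2
  | .limp φ ψ => deg φ + deg ψ + 1
  | .tens φ ψ => deg φ + deg ψ + 1
  | .wth φ ψ => deg φ + deg ψ + 1
  | .plus φ ψ => deg φ + deg ψ + 1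
  | .bang φ => deg φ + 1

theorem one_le_deg (φ : Fml) : 1 ≤ deg φ := by
  cases φ <;> simp [deg] <;> omega

mutual
  /-- Support `⊩_B^L φ` (empty left-hand side). -/
  def Supp : Base → Multiset Atom → Fml → Prop
    | B, L, .atom p => Deriv B L p
    | _, _, .top => True
    | B, L, .zero => ∀ (K : Multiset Atom) (p : Atom), Supp B (L + K) (.atom p)
    | B, L, .one => ∀ C : Base, B ⊆ C → ∀ (K : Multiset Atom) (p : Atom),
        Supp C K (.atom p) → Supp C (L + K) (.atom p)
    | B, L, .limp φ ψ => SuppInf1 B L φ ψ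
    | B, L, .tens φ ψ => ∀ C : Base, B ⊆ C → ∀ (K : Multiset Atom) (p : Atom),
        SuppInf2 C K φ ψ (.atom p) → Supp C (L + K) (.atom p)
    | B, L, .wth φ ψ => Supp B L φ ∧ Supp B L ψ
    | B, L, .plus φ ψ => ∀ C : Base, B ⊆ C → ∀ (K : Multiset Atom) (p : Atom),
        SuppInf1 C K φ (.atom p) → SuppInf1 C K ψ (.atom p) → Supp C (L + K) (.atom p)
    | B, L, .bang φ => ∀ C : Base, B ⊆ C → ∀ (K : Multiset Atom) (p : Atom),
        (∀ D : Base, C ⊆ D → Supp D 0 φ → Supp D K (.atom p)) → Supp C (L + K) (.atom p)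
  termination_by B L φ => 2 * deg φ
  decreasing_by
    all_goals
      try simp only [deg]
      try have h1 := one_le_deg φ
      try have h2 := one_le_deg ψ
      try have h3 := one_le_deg χ
      try have h4 := one_le_deg α
      try have h5 := one_le_deg β
      omega

  /-- The (Inf) clause for a singleton context `{φ} ⊩_B^L χ`. -/
  def SuppInf1 : Base → Multiset Atom → Fml → Fml → Prop
    | B, L, .bang α, χ => ∀ C : Base, B ⊆ C → Supp C 0 α → Supp C L χ
    | B, L, φ, χ => ∀ C : Base, B ⊆ C → ∀ K : Multiset Atom,
        Supp C K φ → Supp C (L + K) χ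
  termination_by B L φ χ => 2 * (deg φ + deg χ) - 1
  decreasing_by
    all_goals
      try simp only [deg]
      try have h1 := one_le_deg φ
      try have h2 := one_le_deg ψ
      try have h3 := one_le_deg χ
      try have h4 := one_le_deg α
      try have h5 := one_le_deg β
      omega

  /-- The (Inf) clause for a two-element context `{φ, ψ} ⊩_B^L χ`. -/
  def SuppInf2 : Base → Multiset Atom → Fml → Fml → Fml → Prop
    | B, L, .bang α, .bang β, χ => ∀ C : Base, B ⊆ C →
        Supp C 0 α → Supp C 0 β → Supp C L χ
    | B, L, .bang α, ψ, χ => ∀ C : Base, B ⊆ C → ∀ K : Multiset Atom,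
        Supp C 0 α → Supp C K ψ → Supp C (L + K) χ
    | B, L, φ, .bang β, χ => ∀ C : Base, B ⊆ C → ∀ K : Multiset Atom,
        Supp C 0 β → Supp C K φ → Supp C (L + K) χ
    | B, L, φ, ψ, χ => ∀ C : Base, B ⊆ C → ∀ K₁ K₂ : Multiset Atom,
        Supp C K₁ φ → Supp C K₂ ψ → Supp C (L + K₁ + K₂) χ
  termination_by B L φ ψ χ => 2 * (deg φ + deg ψ + deg χ) - 1
  decreasing_by
    all_goals
      try simp only [deg]
      try have h1 := one_le_deg φ
      try have h2 := one_le_deg ψ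
      try have h3 := one_le_deg χ
      try have h4 := one_le_deg α
      try have h5 := one_le_deg β
      omega
end

/-- Is the formula a `!`-formula? -/
def isBang : Fml → Bool
  | .bang _ => true
  | _ => false

/-- Strip a top-level `!`. -/
def unbang : Fml → Fml
  | .bang φ => φ
  | φ => φ

/-- Support for a multiset of formulas: the `(⊎)` clause. -/
def SuppMS (B : Base) (L : Multiset Atom) (Γ : Multiset Fml) : Prop :=
  ∃ l : List (Fml × Multiset Atom), (↑(l.map Prod.fst) : Multiset Fml) = Γ ∧
    (l.map Prod.snd).sum = L ∧ ∀ x ∈ l, Supp B x.2 x.1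

/-- The official (Inf) clause: `Γ ⊩_B^L φ`, where `Γ = !Δ ⊎ Θ`. -/
def SuppSeq (B : Base) (L : Multiset Atom) (Γ : Multiset Fml) (φ : Fml) : Prop :=
  ∀ C : Base, B ⊆ C → ∀ K : Multiset Atom,
    SuppMS C 0 ((Γ.filter (fun ψ => isBang ψ = true)).map unbang) →
    SuppMS C K (Γ.filter (fun ψ => isBang ψ = false)) →
    Supp C (L + K) φ

/-- Validity of a sequent `(Γ : φ)`. -/
def Valid (Γ : Multiset Fml) (φ : Fml) : Prop :=
  ∀ B : Base, SuppSeq B 0 Γ φ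


theorem Deriv.mono {B C : Base} (hBC : B ⊆ C) {L : Multiset Atom} {p : Atom}
    (h : Deriv B L p) : Deriv C L p := by
  induction h with
  | ref p => exact Deriv.ref p
  | app S p bc dc hrule hpers hbox hd hS ihbox ihd ihS =>
      exact Deriv.app S p bc dc (hBC hrule)
        (fun x hx => (hpers x hx).imp fun S hS => ⟨hS.1, hBC hS.2⟩)
        ihbox ihd ihS

theorem Supp.mono {B C : Base} (hBC : B ⊆ C) {L : Multiset Atom} (φ : Fml)
    (h : Supp B L φ) : Supp C L φ := by
  induction φ generalizing L with
  | atom p =>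
      rw [Supp] at h ⊢
      exact Deriv.mono hBC h
  | top =>
      rw [Supp]
      trivial
  | zero =>
      rw [Supp] at h ⊢
      intro K p
      have := h K p
      rw [Supp] at this ⊢
      exact Deriv.mono hBC this
  | one =>
      rw [Supp] at h ⊢
      exact fun D hCD => h D (hBC.trans hCD)
  | limp φ ψ ihφ ihψ =>
      rw [Supp] at h ⊢
      cases φ <;> rw [SuppInf1] at h ⊢ <;>
        first
          | exact fun D hCD => h D (hBC.trans hCD)
          | (intro α hα; cases hα)
          | (intro α β hα; cases hα)
  | tens φ ψ ihφ ihψ =>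
      rw [Supp] at h ⊢
      exact fun D hCD => h D (hBC.trans hCD)
  | wth φ ψ ihφ ihψ =>
      rw [Supp] at h ⊢
      exact ⟨ihφ h.1, ihψ h.2⟩
  | plus φ ψ ihφ ihψ =>
      rw [Supp] at h ⊢
      exact fun D hCD => h D (hBC.trans hCD)
  | bang φ ihφ =>
      rw [Supp] at h ⊢
      exact fun D hCD => h D (hBC.trans hCD)

theorem SuppMS.mono {B C : Base} (hBC : B ⊆ C) {L : Multiset Atom} {Γ : Multiset Fml}
    (h : SuppMS B L Γ) : SuppMS C L Γ := by
  obtain ⟨l, h1, h2, h3⟩ := h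
  exact ⟨l, h1, h2, fun x hx => Supp.mono hBC x.1 (h3 x hx)⟩

theorem semantic_promotion (Γ : Multiset Fml) (φ : Fml)
    (h : Valid (Γ.map Fml.bang) φ) : Valid (Γ.map Fml.bang) (.bang φ) := by
  intro B C hBC K hbangs hrest
  have hfilt1 : (Γ.map Fml.bang).filter (fun ψ => isBang ψ = true) = Γ.map Fml.bang := by
    rw [Multiset.filter_eq_self]
    intro ψ hψ
    obtain ⟨a, _, rfl⟩ := Multiset.mem_map.mp hψ
    rfl
  have hfilt2 : (Γ.map Fml.bang).filter (fun ψ => isBang ψ = false) = 0 := by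
    rw [Multiset.filter_eq_nil]
    intro ψ hψ
    obtain ⟨a, _, rfl⟩ := Multiset.mem_map.mp hψ
    simp [isBang]
  rw [hfilt2] at hrest
  obtain ⟨l, hl1, hl2, _⟩ := hrest
  have hlnil : l = [] := by
    cases l with
    | nil => rfl
    | cons a l => simp at hl1
  have hK : K = 0 := by
    subst hlnil; simpa using hl2.symm
  subst hK
  show Supp C (0 + 0) (.bang φ)
  rw [Supp]
  intro D hCD K p hf
  rw [hfilt1] at hbangs
  have hΓD : SuppMS D 0 (((Γ.map Fml.bang).filter (fun ψ => isBang ψ = true)).map unbang) := by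
    rw [hfilt1]
    exact SuppMS.mono hCD hbangs
  have hrestD : SuppMS D 0 ((Γ.map Fml.bang).filter (fun ψ => isBang ψ = false)) := by
    rw [hfilt2]; exact ⟨[], rfl, rfl, by simp⟩
  have hφ : Supp D (0 + 0) φ := h B D (hBC.trans hCD) 0 hΓD hrestD
  rw [show ((0 : Multiset Atom) + 0) = 0 from rfl] at hφ
  have := hf D (subset_refl D) hφ
  simpa using this
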